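/- There is an absolute constant C > 0 such that for all n ≥ k ≥ 3 and r > s > r/2, one has A_k(n;r,s) ≤ T_{k−3}(n^{C·binom(r,s)^2·log binom(r,s)}), where T_j denotes the tower function of height j. -/

import Mathlib

/-- `A_k(n; r, s)`: the least `N` such that every `r`-coloring of the
`k`-element subsets of `[N]` (identified with `{0, …, N-1}`) contains a tight
monotone path with `n` edges (vertices `w 0 < ⋯ < w (n+k-2)`, edges the sets
of `k` consecutive vertices) using at most `s` colors. -/
noncomputable def colorAvoidA (k n r s : ℕ) : ℕ :=
  sInf {N : ℕ | ∀ Δ : Finset ℕ → Fin r,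
    ∃ w : ℕ → ℕ, (∀ i < n + k - 2, w i < w (i + 1)) ∧ (∀ i ≤ n + k - 2, w i < N) ∧
      ((Finset.range n).image fun i => Δ ((Finset.Icc i (i + k - 1)).image w)).card ≤ s}

/-- The tower function with real argument: `T 0 x = x`, `T (j+1) x = 2 ^ (T j x)`. -/
noncomputable def towerR : ℕ → ℝ → ℝ
  | 0, x => x
  | j + 1, x => (2 : ℝ) ^ towerR j x

open Finset

namespace CAP

/-- natural-number tower -/
def twrN : ℕ → ℕ → ℕ
  | 0, m => m
  | j+1, m => 2 ^ twrN j m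

lemma twrN_mono (j : ℕ) : Monotone (twrN j) := by
  induction j with
  | zero => exact fun a b h => h
  | succ j ih => exact fun a b h => Nat.pow_le_pow_right (by norm_num) (ih h)

lemma two_pow_add_le (x c : ℕ) : 2 ^ x + c ≤ 2 ^ (x + c) := by
  have h1 : c + 1 ≤ 2 ^ c := (Nat.lt_two_pow_self (n := c))
  have h2 : 1 ≤ 2 ^ x := Nat.one_le_two_pow
  calc 2 ^ x + c ≤ 2 ^ x + 2 ^ x * c := by nlinarith
    _ = 2 ^ x * (c + 1) := by ring
    _ ≤ 2 ^ x * 2 ^ c := Nat.mul_le_mul_left _ h1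
    _ = 2 ^ (x + c) := (pow_add 2 x c).symm

lemma twrN_add_le (j a c : ℕ) : twrN j a + c ≤ twrN j (a + c) := by
  induction j with
  | zero => simp [twrN]
  | succ j ih =>
      simp only [twrN]
      calc 2 ^ twrN j a + c ≤ 2 ^ (twrN j a + c) := two_pow_add_le _ _
        _ ≤ 2 ^ twrN j (a + c) := Nat.pow_le_pow_right (by norm_num) ih

lemma le_twrN (j m : ℕ) : m ≤ twrN j m := by
  have := twrN_add_le j 0 m
  simpa using this.trans' (by omega)

lemma mul_twrN_le {i : ℕ} (hi : 1 ≤ i) (c z : ℕ) : c * twrN i z ≤ twrN i (z + c) := by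
  obtain ⟨i, rfl⟩ : ∃ i', i = i' + 1 := ⟨i - 1, by omega⟩
  simp only [twrN]
  have h1 : c ≤ 2 ^ c := Nat.le_of_lt ((Nat.lt_two_pow_self (n := c)))
  calc c * 2 ^ twrN i z ≤ 2 ^ c * 2 ^ twrN i z := Nat.mul_le_mul_right _ h1
    _ = 2 ^ (twrN i z + c) := by rw [← pow_add]; ring_nf
    _ ≤ 2 ^ twrN i (z + c) := Nat.pow_le_pow_right (by norm_num) (twrN_add_le i z c)

lemma chain_lt {f : ℕ → ℕ} {L : ℕ} (h : ∀ i < L, f i < f (i+1)) :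
    ∀ x y, x < y → y ≤ L → f x < f y := by
  intro x y hxy hyL
  induction y with
  | zero => omega
  | succ y ih =>
      rcases Nat.lt_or_ge x y with h' | h'
      · exact (ih h' (by omega)).trans (h y (by omega))
      · have : x = y := by omega
        subst this
        exact h x (by omega)

lemma choose_le_pow' (m : ℕ) : ∀ k, m.choose k ≤ m ^ k := by
  intro k
  induction k with
  | zero => simp
  | succ k ih =>
      have h := Nat.choose_succ_right_eq m k
      have h2 : m.choose (k+1) ≤ m.choose k * m := by
        nlinarith [Nat.sub_le m k, Nat.choose_pos (show 0 ≤ m from Nat.zero_le m)]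
      calc m.choose (k+1) ≤ m.choose k * m := h2
        _ ≤ m ^ k * m := Nat.mul_le_mul_right _ ih
        _ = m ^ (k+1) := by ring

/-- strict inequality `2·C(r-1,s) < C(r,s)` under `s < r < 2s`. -/
lemma two_choose_lt {r s : ℕ} (hs : s < r) (h2 : r < 2 * s) :
    2 * ((r-1).choose s) < r.choose s := by
  obtain ⟨r', rfl⟩ : ∃ r', r = r' + 1 := ⟨r - 1, by omega⟩
  obtain ⟨s', rfl⟩ : ∃ s', s = s' + 1 := ⟨s - 1, by omega⟩
  have hid := Nat.choose_succ_right_eq r' s'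
  have hBpos : 0 < r'.choose s' := Nat.choose_pos (by omega)
  have hlt : r' - s' < s' + 1 := by omega
  have hAB : r'.choose (s'+1) < r'.choose s' := by
    by_contra hcon
    push_neg at hcon
    nlinarith
  have hsplit : (r'+1).choose (s'+1) = r'.choose s' + r'.choose (s'+1) :=
    Nat.choose_succ_succ r' s'
  simp only [Nat.add_sub_cancel]
  omega

lemma r_le_choose {r s : ℕ} (hs0 : 0 < s) (hsr : s < r) : r ≤ r.choose s := by
  obtain ⟨r', rfl⟩ : ∃ r', r = r' + 1 := ⟨r - 1, by omega⟩
  obtain ⟨s', rfl⟩ : ∃ s', s = s' + 1 := ⟨s - 1, by omega⟩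
  have hid := Nat.add_one_mul_choose_eq r' s'
  -- (r'+1) * r'.choose s' = (r'+1).choose (s'+1) * (s'+1)
  have hmono : (s'+1).choose s' ≤ r'.choose s' := Nat.choose_mono s' (by omega)
  have hsym : (s'+1).choose s' = s' + 1 := by
    have h1 : (s'+1).choose ((s'+1) - 1) = (s'+1).choose 1 := Nat.choose_symm (by omega)
    simpa using h1
  have hB : s' + 1 ≤ r'.choose s' := by omega
  nlinarith [Nat.choose_pos (show s' + 1 ≤ r' + 1 by omega)]

lemma exists_max_fiber {γ : Type*} [DecidableEq γ] [Nonempty γ] (f : ℕ → γ) (S : Finset ℕ) :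
    ∃ y, ∀ z, (S.filter (fun c => f c = z)).card ≤ (S.filter (fun c => f c = y)).card := by
  rcases S.eq_empty_or_nonempty with rfl | hS
  · exact ⟨Classical.arbitrary γ, fun z => by simp⟩
  · obtain ⟨y, hy, hmax⟩ := Finset.exists_max_image (S.image f)
      (fun y => (S.filter (fun c => f c = y)).card) (hS.image f)
    refine ⟨y, fun z => ?_⟩
    by_cases hz : z ∈ S.image f
    · exact hmax z hz
    · have : S.filter (fun c => f c = z) = ∅ := by
        apply Finset.filter_eq_empty_iff.mpr
        intro c hc hfc
        exact hz (Finset.mem_image.mpr ⟨c, hc, hfc⟩)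
      simp [this]


section Base

variable {r : ℕ}

/-- A tight monotone 3-uniform path with `t` edges, ending with the pair `(a,b)`,
all of whose edge colors lie in `σ`, inside `[N]`. -/
def PathEnd (N : ℕ) (Δ : Finset ℕ → Fin r) (σ : Finset (Fin r)) (a b t : ℕ) : Prop :=
  ∃ w : ℕ → ℕ, (∀ i < t + 1, w i < w (i + 1)) ∧ (∀ i ≤ t + 1, w i < N) ∧
    w t = a ∧ w (t + 1) = b ∧ ∀ i < t, Δ ((Icc i (i + 2)).image w) ∈ σ

lemma pathEnd_zero {N : ℕ} {Δ : Finset ℕ → Fin r} (σ : Finset (Fin r)) {a b : ℕ}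
    (hab : a < b) (hbN : b < N) : PathEnd N Δ σ a b 0 := by
  refine ⟨fun i => if i = 0 then a else b, ?_, ?_, by simp, by simp, ?_⟩
  · intro i hi
    have : i = 0 := by omega
    subst this
    simpa using hab
  · intro i hi
    rcases Nat.eq_zero_or_pos i with h | h
    · subst h; simpa using hab.trans hbN
    · simp only [if_neg (by omega : ¬ i = 0)]; exact hbN
  · intro i hi; exact absurd hi (Nat.not_lt_zero i)

lemma pathEnd_lt {N n s : ℕ} {Δ : Finset ℕ → Fin r}
    (hbad : ¬ ∃ w : ℕ → ℕ, (∀ i < n + 1, w i < w (i + 1)) ∧ (∀ i ≤ n + 1, w i < N) ∧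
      ((range n).image fun i => Δ ((Icc i (i + 2)).image w)).card ≤ s)
    {σ : Finset (Fin r)} (hσ : σ ∈ powersetCard s (univ : Finset (Fin r)))
    {a b t : ℕ} (hP : PathEnd N Δ σ a b t) : t < n := by
  by_contra hcon
  push_neg at hcon
  obtain ⟨w, hmono, hbdd, _, _, hcol⟩ := hP
  refine hbad ⟨fun i => w (i + (t - n)), ?_, ?_, ?_⟩
  · intro i hi
    have h := hmono (i + (t - n)) (by omega)
    have he : i + (t - n) + 1 = i + 1 + (t - n) := by omega
    rwa [he] at h
  · intro i hi
    exact hbdd (i + (t - n)) (by omega)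
  · have hsub : ((range n).image fun i => Δ ((Icc i (i + 2)).image fun j => w (j + (t - n)))) ⊆ σ := by
      intro z hz
      simp only [mem_image, mem_range] at hz
      obtain ⟨i, hi, rfl⟩ := hz
      have hedge : (Icc i (i + 2)).image (fun j => w (j + (t - n))) =
          (Icc (i + (t - n)) (i + (t - n) + 2)).image w := by
        ext y
        simp only [mem_image, mem_Icc]
        constructor
        · rintro ⟨x, hx, rfl⟩; exact ⟨x + (t - n), by omega, rfl⟩
        · rintro ⟨x, hx, rfl⟩
          exact ⟨x - (t - n), by omega, by congr 1; omega⟩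
      rw [hedge]
      exact hcol _ (by omega)
    have hcard := Finset.card_le_card hsub
    have hσcard : σ.card = s := (Finset.mem_powersetCard.mp hσ).2
    omega

/-- longest `σ`-tight-path ending with the pair `(a,b)` -/
noncomputable def ell (N : ℕ) (Δ : Finset ℕ → Fin r) (σ : Finset (Fin r)) (a b : ℕ) : ℕ :=
  sSup {t | PathEnd N Δ σ a b t}

lemma ell_spec {N n s : ℕ} {Δ : Finset ℕ → Fin r}
    (hbad : ¬ ∃ w : ℕ → ℕ, (∀ i < n + 1, w i < w (i + 1)) ∧ (∀ i ≤ n + 1, w i < N) ∧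
      ((range n).image fun i => Δ ((Icc i (i + 2)).image w)).card ≤ s)
    {σ : Finset (Fin r)} (hσ : σ ∈ powersetCard s (univ : Finset (Fin r)))
    {a b : ℕ} (hab : a < b) (hbN : b < N) :
    PathEnd N Δ σ a b (ell N Δ σ a b) ∧ ell N Δ σ a b < n := by
  have hne : {t | PathEnd N Δ σ a b t}.Nonempty := ⟨0, pathEnd_zero σ hab hbN⟩
  have hbd : BddAbove {t | PathEnd N Δ σ a b t} :=
    ⟨n, fun t ht => (pathEnd_lt hbad hσ ht).le⟩
  have hmem := Nat.sSup_mem hne hbd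
  exact ⟨hmem, pathEnd_lt hbad hσ hmem⟩

lemma ell_step {N n s : ℕ} {Δ : Finset ℕ → Fin r}
    (hbad : ¬ ∃ w : ℕ → ℕ, (∀ i < n + 1, w i < w (i + 1)) ∧ (∀ i ≤ n + 1, w i < N) ∧
      ((range n).image fun i => Δ ((Icc i (i + 2)).image w)).card ≤ s)
    {σ : Finset (Fin r)} (hσ : σ ∈ powersetCard s (univ : Finset (Fin r)))
    {a b c : ℕ} (hab : a < b) (hbc : b < c) (hcN : c < N)
    (hx : Δ (insert a (insert b {c})) ∈ σ) :
    ell N Δ σ a b + 1 ≤ ell N Δ σ b c := by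
  obtain ⟨⟨w, hmono, hbdd, hwt, hwt1, hcol⟩, _⟩ := ell_spec hbad hσ hab (hbc.trans hcN)
  set t := ell N Δ σ a b with ht
  have hP : PathEnd N Δ σ b c (t + 1) := by
    refine ⟨fun i => if i ≤ t + 1 then w i else c, ?_, ?_, ?_, ?_, ?_⟩
    · intro i hi
      by_cases h1 : i + 1 ≤ t + 1
      · simp only [if_pos (by omega : i ≤ t + 1), if_pos h1]
        exact hmono i (by omega)
      · have hi' : i = t + 1 := by omega
        subst hi'
        simp only [if_pos (le_refl (t+1)), if_neg (by omega : ¬ t + 1 + 1 ≤ t + 1)]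
        rw [hwt1]; exact hbc
    · intro i hi
      by_cases h1 : i ≤ t + 1
      · simp only [if_pos h1]; exact hbdd i h1
      · simp only [if_neg h1]; exact hcN
    · simp only [if_pos (by omega : t + 1 ≤ t + 1)]; exact hwt1
    · simp only [if_neg (by omega : ¬ t + 1 + 1 ≤ t + 1)]
    · intro i hi
      by_cases h1 : i < t
      · have hedge : (Icc i (i + 2)).image (fun j => if j ≤ t + 1 then w j else c) =
            (Icc i (i + 2)).image w := by
          apply Finset.image_congr
          intro x hx'
          simp only [mem_coe, mem_Icc] at hx'
          simp only [if_pos (by omega : x ≤ t + 1)]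
        rw [hedge]
        exact hcol i h1
      · have hi' : i = t := by omega
        subst hi'
        have hIcc : Icc t (t + 2) = insert t (insert (t+1) {t+2}) := by
          ext x
          simp only [mem_Icc, mem_insert, mem_singleton]
          omega
        have hedge : (Icc t (t + 2)).image (fun j => if j ≤ t + 1 then w j else c) =
            insert a (insert b {c}) := by
          rw [hIcc]
          simp only [Finset.image_insert, Finset.image_singleton]
          rw [if_pos (by omega : t ≤ t + 1), if_pos (le_refl (t+1)),
            if_neg (by omega : ¬ t + 2 ≤ t + 1), hwt, hwt1]
        rw [hedge]
        exact hx
  have hbd : BddAbove {t' | PathEnd N Δ σ b c t'} :=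
    ⟨n, fun t' ht' => (pathEnd_lt hbad hσ ht').le⟩
  exact le_csSup hbd hP

lemma exists_common_sset {s : ℕ} (hs : s < r) (h2 : r < 2 * s) (x y : Fin r) :
    ∃ σ ∈ powersetCard s (univ : Finset (Fin r)), x ∈ σ ∧ y ∈ σ := by
  classical
  set SS := powersetCard s (univ : Finset (Fin r)) with hSS
  have hcount : ∀ z : Fin r, (SS.filter (fun σ => z ∉ σ)).card = (r-1).choose s := by
    intro z
    have he : SS.filter (fun σ => z ∉ σ) = powersetCard s (univ.erase z) := by
      ext σ
      simp only [mem_filter, Finset.mem_powersetCard, Finset.subset_erase, hSS]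
      constructor
      · rintro ⟨⟨h1, h2⟩, h3⟩; exact ⟨⟨h1, h3⟩, h2⟩
      · rintro ⟨⟨h1, h3⟩, h2⟩; exact ⟨⟨h1, h2⟩, h3⟩
    rw [he, Finset.card_powersetCard, Finset.card_erase_of_mem (mem_univ z),
      Finset.card_univ, Fintype.card_fin]
  have hQ : SS.card = r.choose s := by
    rw [hSS, Finset.card_powersetCard, Finset.card_univ, Fintype.card_fin]
  have hkey := two_choose_lt hs h2
  by_contra hcon
  push_neg at hcon
  have hsub : SS ⊆ SS.filter (fun σ => x ∉ σ) ∪ SS.filter (fun σ => y ∉ σ) := by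
    intro σ hσ
    by_cases hxσ : x ∈ σ
    · exact mem_union_right _ (mem_filter.mpr ⟨hσ, hcon σ hσ hxσ⟩)
    · exact mem_union_left _ (mem_filter.mpr ⟨hσ, hxσ⟩)
  have h1 := Finset.card_le_card hsub
  have h2' := Finset.card_union_le (SS.filter (fun σ => x ∉ σ)) (SS.filter (fun σ => y ∉ σ))
  rw [hcount x, hcount y] at h2'
  omega

/-- The polynomial base case `k = 3`. -/
lemma base_good {s : ℕ} (hs : s < r) (h2 : r < 2 * s) (n : ℕ) (hn : 1 ≤ n)
    (Δ : Finset ℕ → Fin r) :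
    ∃ w : ℕ → ℕ, (∀ i < n + 1, w i < w (i + 1)) ∧
      (∀ i ≤ n + 1, w i < 2 * n ^ (r.choose s) + 4) ∧
      ((range n).image fun i => Δ ((Icc i (i + 2)).image w)).card ≤ s := by
  classical
  by_contra hbad
  set Q := r.choose s with hQdef
  set N := 2 * n ^ Q + 4 with hN
  set SS := powersetCard s (univ : Finset (Fin r)) with hSS
  have hFwell : ∀ (j : ℕ) (σ : ↥SS), min (ell N Δ (σ : Finset (Fin r)) (2*j) (2*j+1)) (n-1) < n :=
    fun j σ => by omega
  set F : ℕ → (↥SS → Fin n) :=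
    fun j σ => ⟨min (ell N Δ (σ : Finset (Fin r)) (2*j) (2*j+1)) (n-1), hFwell j σ⟩ with hF
  have haux : ∀ j j', j < j' → j' ≤ n ^ Q → F j ≠ F j' := by
    intro j j' hjj hj'
    have hm1 : 2*j < 2*j+1 := by omega
    have hm2 : 2*j+1 < 2*j' := by omega
    have hm3 : 2*j' < 2*j'+1 := by omega
    have hm4 : 2*j'+1 < N := by
      have hp : j' ≤ n ^ Q := hj'
      omega
    obtain ⟨σ, hsigSS, hx1, hx2⟩ := exists_common_sset hs h2
      (Δ (insert (2*j) (insert (2*j+1) {2*j'}))) (Δ (insert (2*j+1) (insert (2*j') {2*j'+1})))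
    have hstep1 := ell_step hbad hsigSS hm1 hm2 (hm3.trans hm4) hx1
    have hstep2 := ell_step hbad hsigSS hm2 hm3 hm4 hx2
    have hlt1 : ell N Δ σ (2*j) (2*j+1) < n :=
      (ell_spec hbad hsigSS hm1 (by omega)).2
    have hlt2 : ell N Δ σ (2*j') (2*j'+1) < n :=
      (ell_spec hbad hsigSS hm3 hm4).2
    intro heq
    have hc := congrFun heq ⟨σ, hsigSS⟩
    simp only [hF, Fin.mk.injEq] at hc
    omega
  have hinj : Set.InjOn F ↑(range (n ^ Q + 1)) := by
    intro a ha b hb hab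
    simp only [coe_range, Set.mem_Iio] at ha hb
    by_contra hne
    rcases Nat.lt_or_ge a b with h | h
    · exact haux a b h (by omega) hab
    · exact haux b a (by omega) (by omega) hab.symm
  have hcard := Finset.card_le_card_of_injOn F (fun a _ => mem_univ _) hinj
  rw [card_range, Finset.card_univ] at hcard
  have hcf : Fintype.card (↥SS → Fin n) = n ^ Q := by
    rw [Fintype.card_fun, Fintype.card_coe, Fintype.card_fin]
    congr 1
    rw [hSS, Finset.card_powersetCard, Finset.card_univ, Fintype.card_fin]
  rw [hcf] at hcard
  omega

end Base


section Step

variable {r : ℕ} (M k : ℕ) (Δ : Finset ℕ → Fin r)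

/-- fingerprint of a candidate vertex `c` at stage `t`, relative to index-vector `v` -/
noncomputable def fp (v : ℕ → ℕ) (t c : ℕ) : ↥(powersetCard k (range (M+1))) → Fin r :=
  fun A => if (A : Finset ℕ) ⊆ range (t+1) then Δ (insert c ((A : Finset ℕ).image v)) else Δ ∅

noncomputable def bestOf (v : ℕ → ℕ) (t : ℕ) (S : Finset ℕ) :
    ↥(powersetCard k (range (M+1))) → Fin r :=
  haveI : Nonempty (↥(powersetCard k (range (M+1))) → Fin r) := ⟨fun _ => Δ ∅⟩
  Classical.choose (exists_max_fiber (fp M k Δ v t) S)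

lemma bestOf_spec (v : ℕ → ℕ) (t : ℕ) (S : Finset ℕ) (z : ↥(powersetCard k (range (M+1))) → Fin r) :
    (S.filter (fun c => fp M k Δ v t c = z)).card ≤
      (S.filter (fun c => fp M k Δ v t c = bestOf M k Δ v t S)).card := by
  haveI : Nonempty (↥(powersetCard k (range (M+1))) → Fin r) := ⟨fun _ => Δ ∅⟩
  exact Classical.choose_spec (exists_max_fiber (fp M k Δ v t) S) z

noncomputable def ERstep (t : ℕ) (p : Finset ℕ × (ℕ → ℕ)) : Finset ℕ × (ℕ → ℕ) :=
  ((p.1.erase (sInf (p.1 : Set ℕ))).filter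
      (fun c => fp M k Δ (Function.update p.2 t (sInf (p.1 : Set ℕ))) t c =
        bestOf M k Δ (Function.update p.2 t (sInf (p.1 : Set ℕ))) t
          (p.1.erase (sInf (p.1 : Set ℕ)))),
    Function.update p.2 t (sInf (p.1 : Set ℕ)))

noncomputable def ER (N : ℕ) : ℕ → Finset ℕ × (ℕ → ℕ)
  | 0 => (range N, fun _ => 0)
  | (t+1) => ERstep M k Δ t (ER N t)

/-- the selected vertices -/
noncomputable def uER (N t : ℕ) : ℕ := sInf (((ER M k Δ N t).1 : Finset ℕ) : Set ℕ)

variable (N : ℕ)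

lemma ER_succ (t : ℕ) : ER M k Δ N (t+1) = ERstep M k Δ t (ER M k Δ N t) := rfl

lemma ER_succ_snd (t : ℕ) :
    (ER M k Δ N (t+1)).2 = Function.update (ER M k Δ N t).2 t (uER M k Δ N t) := rfl

lemma ER_succ_fst_subset (t : ℕ) :
    (ER M k Δ N (t+1)).1 ⊆ ((ER M k Δ N t).1).erase (uER M k Δ N t) :=
  Finset.filter_subset _ _

lemma ER_mono : ∀ {t t' : ℕ}, t ≤ t' → (ER M k Δ N t').1 ⊆ (ER M k Δ N t).1 := by
  intro t t' h
  induction t' with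
  | zero => have : t = 0 := by omega
            subst this; exact Finset.Subset.refl _
  | succ t' ih =>
      rcases Nat.lt_or_ge t (t'+1) with h' | h'
      · exact ((ER_succ_fst_subset M k Δ N t').trans (Finset.erase_subset _ _)).trans (ih (by omega))
      · have : t = t'+1 := by omega
        subst this; exact Finset.Subset.refl _

lemma ER_subset_range (t : ℕ) : (ER M k Δ N t).1 ⊆ range N :=
  ER_mono M k Δ N (Nat.zero_le t)

lemma ER_snd_eq (t : ℕ) : ∀ i < t, (ER M k Δ N t).2 i = uER M k Δ N i := by
  induction t with
  | zero => intro i hi; omega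
  | succ t ih =>
      intro i hi
      rw [ER_succ_snd]
      rcases Nat.lt_or_ge i t with h | h
      · rw [Function.update_of_ne (by omega)]
        exact ih i h
      · have : i = t := by omega
        subst this
        rw [Function.update_self]

lemma ER_card (hN : N = (Fintype.card (↥(powersetCard k (range (M+1))) → Fin r) + 1) ^ (M+2))
    (hr : 0 < r) :
    ∀ t ≤ M + 2,
      (Fintype.card (↥(powersetCard k (range (M+1))) → Fin r) + 1) ^ (M + 2 - t) ≤
        (ER M k Δ N t).1.card := by
  haveI : Nonempty (Fin r) := ⟨⟨0, hr⟩⟩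
  set D := Fintype.card (↥(powersetCard k (range (M+1))) → Fin r) with hD
  have hDpos : 0 < D := Fintype.card_pos
  intro t
  induction t with
  | zero => intro _
            simp only [ER, Nat.sub_zero, card_range, hN, le_refl]
  | succ t ih =>
      intro ht
      have hprev := ih (by omega)
      -- the current set is nonempty
      have hSne : ((ER M k Δ N t).1).Nonempty := by
        rw [← Finset.card_pos]
        calc 0 < (D+1) ^ (M + 2 - t) := Nat.pow_pos (by omega)
          _ ≤ _ := hprev
      have hamem : uER M k Δ N t ∈ (ER M k Δ N t).1 := by
        have := Nat.sInf_mem (Finset.coe_nonempty.mpr hSne)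
        exact_mod_cast this
      set S := (ER M k Δ N t).1 with hS
      set a := uER M k Δ N t with ha
      have hcarderase : (S.erase a).card = S.card - 1 := Finset.card_erase_of_mem hamem
      -- pigeonhole
      set v := Function.update (ER M k Δ N t).2 t a with hv
      set f := fp M k Δ v t with hf
      have hfiber : (S.erase a).card ≤ D * ((ER M k Δ N (t+1)).1).card := by
        have h1 : (S.erase a).card =
            ∑ b ∈ (S.erase a).image f, ((S.erase a).filter (fun c => f c = b)).card :=
          Finset.card_eq_sum_card_fiberwise (fun x hx => Finset.mem_image_of_mem f hx)
        have h2 : ∀ b ∈ (S.erase a).image f,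
            ((S.erase a).filter (fun c => f c = b)).card ≤
            ((S.erase a).filter (fun c => f c = bestOf M k Δ v t (S.erase a))).card :=
          fun b _ => bestOf_spec M k Δ v t (S.erase a) b
        have h3 := Finset.sum_le_card_nsmul _ _ _ h2
        rw [smul_eq_mul] at h3
        have h4 : ((S.erase a).image f).card ≤ D := by
          rw [hD]
          exact Finset.card_le_univ _ |>.trans (le_of_eq Finset.card_univ)
        have h5 : (ER M k Δ N (t+1)).1 =
            (S.erase a).filter (fun c => f c = bestOf M k Δ v t (S.erase a)) := rfl
        rw [h5]
        calc (S.erase a).card ≤ ((S.erase a).image f).card *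
              ((S.erase a).filter (fun c => f c = bestOf M k Δ v t (S.erase a))).card := by
              omega
          _ ≤ D * _ := Nat.mul_le_mul_right _ h4
      -- combine
      have hexp : M + 2 - t = (M + 2 - (t+1)) + 1 := by omega
      have hgoal : D * (D+1) ^ (M + 2 - (t+1)) ≤ D * ((ER M k Δ N (t+1)).1).card := by
        have : (D+1) ^ ((M + 2 - (t+1)) + 1) ≤ S.card := by rw [← hexp]; exact hprev
        have hh : D * (D+1) ^ (M + 2 - (t+1)) + 1 ≤ S.card := by
          have hone : 1 ≤ (D+1) ^ (M + 2 - (t+1)) := Nat.one_le_pow _ _ (by omega)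
          calc D * (D+1) ^ (M + 2 - (t+1)) + 1
              ≤ D * (D+1) ^ (M + 2 - (t+1)) + (D+1) ^ (M + 2 - (t+1)) := by omega
            _ = (D+1) ^ ((M + 2 - (t+1)) + 1) := by ring
            _ ≤ S.card := this
        omega
      exact Nat.le_of_mul_le_mul_left hgoal hDpos

end Step


section Step2

variable {r : ℕ} (M k : ℕ) (Δ : Finset ℕ → Fin r) (N : ℕ)

lemma uER_mem (hN : N = (Fintype.card (↥(powersetCard k (range (M+1))) → Fin r) + 1) ^ (M+2))
    (hr : 0 < r) {t : ℕ} (ht : t ≤ M + 2) : uER M k Δ N t ∈ (ER M k Δ N t).1 := by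
  have hcard := ER_card M k Δ N hN hr t ht
  have hSne : ((ER M k Δ N t).1).Nonempty := by
    rw [← Finset.card_pos]
    calc 0 < _ ^ (M + 2 - t) := Nat.pow_pos (by omega)
      _ ≤ _ := hcard
  have := Nat.sInf_mem (Finset.coe_nonempty.mpr hSne)
  exact_mod_cast this

lemma uER_lt_succ (hN : N = (Fintype.card (↥(powersetCard k (range (M+1))) → Fin r) + 1) ^ (M+2))
    (hr : 0 < r) {t : ℕ} (ht : t + 1 ≤ M + 2) : uER M k Δ N t < uER M k Δ N (t+1) := by
  have hmem := uER_mem M k Δ N hN hr ht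
  have hmem1 := uER_mem M k Δ N hN hr (show t ≤ M + 2 by omega)
  have hsub := ER_succ_fst_subset M k Δ N t
  have h1 : uER M k Δ N (t+1) ∈ ((ER M k Δ N t).1).erase (uER M k Δ N t) := hsub hmem
  have h2 : uER M k Δ N (t+1) ∈ (ER M k Δ N t).1 := Finset.mem_of_mem_erase h1
  have h3 : uER M k Δ N (t+1) ≠ uER M k Δ N t := Finset.ne_of_mem_erase h1
  have h4 : uER M k Δ N t ≤ uER M k Δ N (t+1) := Nat.sInf_le (by exact_mod_cast h2)
  omega

lemma uER_mono (hN : N = (Fintype.card (↥(powersetCard k (range (M+1))) → Fin r) + 1) ^ (M+2))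
    (hr : 0 < r) {i j : ℕ} (hij : i < j) (hj : j ≤ M + 1) :
    uER M k Δ N i < uER M k Δ N j := by
  refine chain_lt (f := uER M k Δ N) (L := M + 1) (fun t ht => ?_) i j hij hj
  exact uER_lt_succ M k Δ N hN hr (by omega)

lemma uER_lt_N (hN : N = (Fintype.card (↥(powersetCard k (range (M+1))) → Fin r) + 1) ^ (M+2))
    (hr : 0 < r) {t : ℕ} (ht : t ≤ M + 2) : uER M k Δ N t < N := by
  have := ER_subset_range M k Δ N t (uER_mem M k Δ N hN hr ht)
  exact Finset.mem_range.mp this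

lemma ER_fiber_eq {t : ℕ} {c c' : ℕ}
    (hc : c ∈ (ER M k Δ N (t+1)).1) (hc' : c' ∈ (ER M k Δ N (t+1)).1) :
    fp M k Δ ((ER M k Δ N (t+1)).2) t c = fp M k Δ ((ER M k Δ N (t+1)).2) t c' := by
  have h5 : (ER M k Δ N (t+1)).1 =
      (((ER M k Δ N t).1).erase (uER M k Δ N t)).filter
        (fun c => fp M k Δ ((ER M k Δ N (t+1)).2) t c =
          bestOf M k Δ ((ER M k Δ N (t+1)).2) t (((ER M k Δ N t).1).erase (uER M k Δ N t))) := rfl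
  rw [h5] at hc hc'
  have h1 := (Finset.mem_filter.mp hc).2
  have h2 := (Finset.mem_filter.mp hc').2
  rw [h1, h2]

/-- end homogeneity -/
lemma ER_endhom (hN : N = (Fintype.card (↥(powersetCard k (range (M+1))) → Fin r) + 1) ^ (M+2))
    (hr : 0 < r) (hk : 1 ≤ k) {I : Finset ℕ} (hIM : ∀ i ∈ I, i < M) (hIcard : I.card = k)
    {j₁ j₂ : ℕ} (hj₁ : j₁ ≤ M) (hj₂ : j₂ ≤ M)
    (hIj₁ : ∀ i ∈ I, i < j₁) (hIj₂ : ∀ i ∈ I, i < j₂) :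
    Δ (insert (uER M k Δ N j₁) (I.image (uER M k Δ N))) =
      Δ (insert (uER M k Δ N j₂) (I.image (uER M k Δ N))) := by
  have hIne : I.Nonempty := by
    rw [← Finset.card_pos]; omega
  set m := I.max' hIne with hm
  have hmI : m ∈ I := Finset.max'_mem I hIne
  have hmM : m < M := hIM m hmI
  -- both u j₁ and u j₂ belong to stage m+1
  have hmem : ∀ j, m < j → j ≤ M → uER M k Δ N j ∈ (ER M k Δ N (m+1)).1 := by
    intro j hmj hjM
    exact ER_mono M k Δ N (by omega) (uER_mem M k Δ N hN hr (by omega))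
  have hfib := ER_fiber_eq M k Δ N
    (hmem j₁ (hIj₁ m hmI) hj₁) (hmem j₂ (hIj₂ m hmI) hj₂)
  -- evaluate the fingerprint equation at I
  have hA : I ∈ powersetCard k (range (M+1)) := by
    rw [Finset.mem_powersetCard]
    exact ⟨fun x hx => Finset.mem_range.mpr (by have := hIM x hx; omega), hIcard⟩
  have heval := congrFun hfib ⟨I, hA⟩
  have hsubI : (I : Finset ℕ) ⊆ range (m+1) := by
    intro x hx
    exact Finset.mem_range.mpr (by have := Finset.le_max' I x hx; omega)
  simp only [fp, hsubI, if_pos] at heval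
  -- replace (ER (m+1)).2 by uER on I
  have himg : I.image ((ER M k Δ N (m+1)).2) = I.image (uER M k Δ N) := by
    apply Finset.image_congr
    intro x hx
    simp only [funext_iff] at *
    exact ER_snd_eq M k Δ N (m+1) x (by have := Finset.le_max' I x hx; omega)
  rwa [himg] at heval

end Step2


section Step3

variable {r : ℕ}

/-- The Erdős–Rado style step: from `k`-uniform paths with `n+1` edges in `[M]`
to `(k+1)`-uniform paths with `n` edges. -/
lemma step_good (hr : 0 < r) {s k n M : ℕ} (hk : 1 ≤ k)
    (hM : ∀ Δ' : Finset ℕ → Fin r, ∃ w' : ℕ → ℕ, (∀ i < n + k - 1, w' i < w' (i + 1)) ∧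
      (∀ i ≤ n + k - 1, w' i < M) ∧
      ((range (n+1)).image fun i => Δ' ((Icc i (i + k - 1)).image w')).card ≤ s)
    (Δ : Finset ℕ → Fin r) :
    ∃ w : ℕ → ℕ, (∀ i < n + k - 1, w i < w (i + 1)) ∧
      (∀ i ≤ n + k - 1, w i < (r ^ ((M+1).choose k) + 1) ^ (M + 2)) ∧
      ((range n).image fun i => Δ ((Icc i (i + k)).image w)).card ≤ s := by
  classical
  set N := (r ^ ((M+1).choose k) + 1) ^ (M + 2) with hNdef
  have hD : Fintype.card (↥(powersetCard k (range (M+1))) → Fin r) = r ^ ((M+1).choose k) := by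
    rw [Fintype.card_fun, Fintype.card_coe, Finset.card_powersetCard, card_range,
      Fintype.card_fin]
  have hN : N = (Fintype.card (↥(powersetCard k (range (M+1))) → Fin r) + 1) ^ (M+2) := by
    rw [hD]
  set u : ℕ → ℕ := uER M k Δ N with hu
  -- derived coloring
  set Δ' : Finset ℕ → Fin r := fun A => Δ (insert (u M) (A.image u)) with hΔ'
  obtain ⟨w', hw'mono, hw'bd, hw'col⟩ := hM Δ'
  refine ⟨fun i => u (w' i), ?_, ?_, ?_⟩
  · intro i hi
    apply uER_mono M k Δ N hN hr (hw'mono i hi)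
    have := hw'bd (i+1) (by omega)
    omega
  · intro i hi
    exact uER_lt_N M k Δ N hN hr (by have := hw'bd i hi; omega)
  · -- colors
    have hsub : ((range n).image fun i => Δ ((Icc i (i + k)).image (fun j => u (w' j)))) ⊆
        ((range (n+1)).image fun i => Δ' ((Icc i (i + k - 1)).image w')) := by
      intro z hz
      simp only [mem_image, mem_range] at hz ⊢
      obtain ⟨i, hi, rfl⟩ := hz
      refine ⟨i, by omega, ?_⟩
      -- edge decomposition
      have hsplit : Icc i (i + k) = insert (i+k) (Icc i (i + k - 1)) := by
        ext x
        simp only [mem_Icc, mem_insert]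
        omega
      set I : Finset ℕ := (Icc i (i + k - 1)).image w' with hI
      have hIM : ∀ x ∈ I, x < M := by
        intro x hx
        simp only [hI, mem_image, mem_Icc] at hx
        obtain ⟨y, hy, rfl⟩ := hx
        exact hw'bd y (by omega)
      have hmonoI : ∀ x ∈ Icc i (i + k - 1), ∀ y ∈ Icc i (i + k - 1), x < y → w' x < w' y := by
        intro x hx y hy hxy
        simp only [mem_Icc] at hx hy
        exact chain_lt hw'mono x y hxy (by omega)
      have hIcard : I.card = k := by
        rw [hI, Finset.card_image_of_injOn, Nat.card_Icc]
        · omega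
        · intro x hx y hy hxy
          simp only [mem_coe] at hx hy
          by_contra hne
          rcases Nat.lt_or_ge x y with h | h
          · exact absurd hxy (Nat.ne_of_lt (hmonoI x hx y hy h))
          · exact absurd hxy.symm (Nat.ne_of_lt (hmonoI y hy x hx (by omega)))
      have hIj₁ : ∀ x ∈ I, x < w' (i + k) := by
        intro x hx
        simp only [hI, mem_image, mem_Icc] at hx
        obtain ⟨y, hy, rfl⟩ := hx
        exact chain_lt hw'mono y (i+k) (by omega) (by omega)
      have hEH := ER_endhom M k Δ N hN hr hk hIM hIcard
        (show w' (i+k) ≤ M by have := hw'bd (i+k) (by omega); omega)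
        (le_refl M) hIj₁ (fun x hx => hIM x hx)
      -- compute the (k+1)-edge
      have himg : (Icc i (i + k)).image (fun j => u (w' j)) =
          insert (u (w' (i+k))) (I.image u) := by
        rw [hsplit, Finset.image_insert, hI, Finset.image_image]
        rfl
      rw [himg, hEH]
    have hcard := Finset.card_le_card hsub
    exact hcard.trans hw'col

end Step3


def Good (r s k n N : ℕ) : Prop :=
  ∀ Δ : Finset ℕ → Fin r, ∃ w : ℕ → ℕ, (∀ i < n + k - 2, w i < w (i + 1)) ∧
    (∀ i ≤ n + k - 2, w i < N) ∧
    ((range n).image fun i => Δ ((Icc i (i + k - 1)).image w)).card ≤ s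

def G (r s : ℕ) : ℕ → ℕ → ℕ
  | 0, n => 2 * n ^ (r.choose s) + 4
  | (j+1), n => (r ^ ((G r s j (n+1) + 1).choose (j+3)) + 1) ^ (G r s j (n+1) + 2)

lemma master {r s : ℕ} (hs : s < r) (h2 : r < 2*s) :
    ∀ j n, 1 ≤ n → Good r s (j+3) n (G r s j n) := by
  intro j
  induction j with
  | zero =>
      intro n hn Δ
      exact base_good hs h2 n hn Δ
  | succ j ih =>
      intro n hn Δ
      have ih' : ∀ Δ' : Finset ℕ → Fin r, ∃ w' : ℕ → ℕ,
          (∀ i < n + (j+3) - 1, w' i < w' (i + 1)) ∧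
          (∀ i ≤ n + (j+3) - 1, w' i < G r s j (n+1)) ∧
          ((range (n+1)).image fun i => Δ' ((Icc i (i + (j+3) - 1)).image w')).card ≤ s := by
        intro Δ'
        have h := ih (n+1) (by omega) Δ'
        have he : n + 1 + (j + 3) - 2 = n + (j+3) - 1 := by omega
        rwa [he] at h
      have e1 : n + (j + 1 + 3) - 2 = n + (j+3) - 1 := by omega
      have e2 : ∀ i : ℕ, i + (j + 1 + 3) - 1 = i + (j + 3) := fun i => by omega
      have h := step_good (r := r) (show 0 < r by omega) (show 1 ≤ j + 3 by omega) ih' Δ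
      simp only [Good, e1, e2]
      exact h


def Wf (Q j : ℕ) : ℕ := (Q+2) * (if j = 0 then 1 else if j = 1 then 10 else 20)

def beta (Q j n : ℕ) : ℕ := (n + j) ^ (Wf Q j) + j^2 + 10*j

lemma Q_ge {r s : ℕ} (hs : s < r) (h2 : r < 2*s) : 3 ≤ r.choose s ∧ r ≤ r.choose s := by
  have hr3 : 3 ≤ r := by omega
  have hle := r_le_choose (show 0 < s by omega) hs
  exact ⟨by omega, hle⟩

lemma G_succ_le {r s : ℕ} (hs : s < r) (h2 : r < 2*s) (j n : ℕ) {T : ℕ}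
    (hM : G r s j (n+1) ≤ T) :
    G r s (j+1) n ≤ 2 ^ ((r.choose s + 1) * (T+2)^(j+4)) := by
  set Q := r.choose s with hQ
  obtain ⟨hQ3, hrQ⟩ := Q_ge hs h2
  have hr2Q : r ≤ 2 ^ Q := hrQ.trans ((Nat.lt_two_pow_self (n := Q))).le
  set M := G r s j (n+1) with hMdef
  have h0 : G r s (j+1) n = (r ^ ((M+1).choose (j+3)) + 1) ^ (M + 2) := rfl
  have h1 : (r ^ ((M+1).choose (j+3)) + 1) ^ (M + 2) ≤
      (r ^ ((T+1).choose (j+3)) + 1) ^ (T + 2) := by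
    have hin : r ^ ((M+1).choose (j+3)) + 1 ≤ r ^ ((T+1).choose (j+3)) + 1 := by
      have hmono : (M+1).choose (j+3) ≤ (T+1).choose (j+3) :=
        Nat.choose_mono (j+3) (show M+1 ≤ T+1 by omega)
      exact Nat.add_le_add_right (Nat.pow_le_pow_right (show 1 ≤ r by omega) hmono) 1
    calc (r ^ ((M+1).choose (j+3)) + 1) ^ (M + 2)
        ≤ (r ^ ((T+1).choose (j+3)) + 1) ^ (M + 2) := Nat.pow_le_pow_left hin _
      _ ≤ (r ^ ((T+1).choose (j+3)) + 1) ^ (T + 2) :=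
          Nat.pow_le_pow_right (by positivity) (by omega)
  have h2' : r ^ ((T+1).choose (j+3)) + 1 ≤ 2 ^ (Q * (T+1).choose (j+3) + 1) := by
    have ha : r ^ ((T+1).choose (j+3)) ≤ (2^Q) ^ ((T+1).choose (j+3)) :=
      Nat.pow_le_pow_left hr2Q _
    rw [← pow_mul] at ha
    have hb : (1:ℕ) ≤ 2 ^ (Q * (T+1).choose (j+3)) := Nat.one_le_two_pow
    calc r ^ ((T+1).choose (j+3)) + 1 ≤ 2 ^ (Q * (T+1).choose (j+3)) + 2 ^ (Q * (T+1).choose (j+3)) := by omega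
      _ = 2 ^ (Q * (T+1).choose (j+3) + 1) := by ring
  have h3 : (r ^ ((T+1).choose (j+3)) + 1) ^ (T + 2) ≤
      2 ^ ((Q * (T+1).choose (j+3) + 1) * (T+2)) := by
    rw [pow_mul]
    exact Nat.pow_le_pow_left h2' _
  have h4 : (Q * (T+1).choose (j+3) + 1) * (T+2) ≤ (Q + 1) * (T+2)^(j+4) := by
    have hc : (T+1).choose (j+3) ≤ (T+2)^(j+3) := by
      calc (T+1).choose (j+3) ≤ (T+1)^(j+3) := choose_le_pow' (T+1) (j+3)
        _ ≤ (T+2)^(j+3) := Nat.pow_le_pow_left (by omega) _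
    have hd : (1:ℕ) ≤ (T+2)^(j+3) := Nat.one_le_pow _ _ (by omega)
    calc (Q * (T+1).choose (j+3) + 1) * (T+2)
        ≤ (Q * (T+2)^(j+3) + (T+2)^(j+3)) * (T+2) := by
          have := Nat.mul_le_mul_left Q hc
          have h2T : (0:ℕ) < T + 2 := by omega
          exact Nat.mul_le_mul_right _ (by omega)
      _ = (Q + 1) * ((T+2)^(j+3) * (T+2)) := by ring
      _ = (Q + 1) * (T+2)^(j+4) := by rw [← pow_succ]
  calc G r s (j+1) n = (r ^ ((M+1).choose (j+3)) + 1) ^ (M + 2) := h0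
    _ ≤ (r ^ ((T+1).choose (j+3)) + 1) ^ (T + 2) := h1
    _ ≤ 2 ^ ((Q * (T+1).choose (j+3) + 1) * (T+2)) := h3
    _ ≤ 2 ^ ((Q + 1) * (T+2)^(j+4)) := Nat.pow_le_pow_right (by omega) h4


lemma key_ineq (Q : ℕ) (hQ3 : 3 ≤ Q) (j n : ℕ) (hn : 3 ≤ n) :
    (Q + 1) * (twrN j (beta Q j (n+1)) + 2) ^ (j+4) ≤ twrN j (beta Q (j+1) n) := by
  have hQ2 : Q + 1 ≤ 2 ^ Q := (Nat.lt_two_pow_self (n := Q))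
  rcases j with _ | j
  · -- j = 0
    simp only [twrN, beta, Wf, if_pos rfl, if_neg (by omega : ¬ (1:ℕ) = 0), if_pos rfl,
      mul_one, Nat.add_zero, Nat.zero_mul, Nat.mul_zero]
    norm_num
    -- goal : (Q+1) * ((n+1)^(Q+2) + 2)^4 ≤ (n+1)^((Q+2)*10) + 11
    set m := n + 1 with hm
    have hm4 : 4 ≤ m := by omega
    set A := m ^ (Q+2) with hA
    have hA4 : 4 ≤ A := by
      calc 4 ≤ m := hm4
        _ ≤ m ^ (Q+2) := Nat.le_self_pow (by omega) m
    have hstep : A + 2 ≤ m ^ (Q+3) := by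
      have h' : m ^ (Q+3) = A * m := by rw [hA, ← pow_succ]
      have h'' : A * 4 ≤ A * m := Nat.mul_le_mul_left A hm4
      omega
    have hb : (A + 2)^4 ≤ m ^ ((Q+3)*4) := by
      rw [pow_mul]
      exact Nat.pow_le_pow_left hstep 4
    have ha : Q + 1 ≤ m ^ Q := by
      calc Q + 1 ≤ 2 ^ Q := hQ2
        _ ≤ m ^ Q := Nat.pow_le_pow_left (by omega) Q
    calc (Q+1) * (A + 2)^4 ≤ m ^ Q * m ^ ((Q+3)*4) := Nat.mul_le_mul ha hb
      _ = m ^ (Q + (Q+3)*4) := (pow_add m Q ((Q+3)*4)).symm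
      _ ≤ m ^ ((Q+2)*10) := Nat.pow_le_pow_right (by omega) (by omega)
      _ ≤ m ^ ((Q+2)*10) + 11 := by omega
  rcases j with _ | jj
  · -- j = 1
    simp only [twrN, beta, Wf, if_neg (by omega : ¬ (1:ℕ) = 0), if_pos rfl,
      if_neg (by omega : ¬ (2:ℕ) = 0), if_neg (by omega : ¬ (2:ℕ) = 1)]
    norm_num
    -- goal : (Q+1) * (2^((n+1+1)^((Q+2)*10) + 11) + 2)^5 ≤ 2^((n+2)^((Q+2)*20) + 24)
    set x := (n + 1 + 1) ^ ((Q+2)*10) with hx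
    have hx2 : (n + 1 + 1) ^ ((Q+2)*20) = x^2 := by
      rw [hx, ← pow_mul]
      congr 1
      ring
    have hxQ : Q ≤ x := by
      calc Q ≤ 2 ^ Q := ((Nat.lt_two_pow_self (n := Q))).le
        _ ≤ (n+1+1) ^ Q := Nat.pow_le_pow_left (by omega) Q
        _ ≤ x := Nat.pow_le_pow_right (by omega) (by omega)
    have hx64 : 64 ≤ x := by
      calc (64:ℕ) = 2^6 := by norm_num
        _ ≤ 2 ^ ((Q+2)*10) := Nat.pow_le_pow_right (by omega) (by omega)
        _ ≤ x := Nat.pow_le_pow_left (by omega) _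
    have h1 : 2 ^ (x + 11) + 2 ≤ 2 ^ (x + 12) := by
      have h2' : (2:ℕ) ≤ 2 ^ (x+11) := by
        calc (2:ℕ) = 2^1 := by norm_num
          _ ≤ 2 ^ (x+11) := Nat.pow_le_pow_right (by omega) (by omega)
      have hps : 2 ^ (x + 12) = 2 ^ (x+11) * 2 := pow_succ 2 (x+11)
      omega
    have h2'' : (2 ^ (x + 11) + 2)^5 ≤ 2 ^ ((x+12)*5) := by
      rw [pow_mul]
      exact Nat.pow_le_pow_left h1 5
    have hexp : Q + (x+12)*5 ≤ x^2 + 24 := by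
      have ex : x^2 = x*x := sq x
      have e64 : 64*x ≤ x*x := Nat.mul_le_mul_right x hx64
      omega
    calc (Q+1) * (2 ^ (x + 11) + 2)^5 ≤ 2^Q * 2^((x+12)*5) := Nat.mul_le_mul hQ2 h2''
      _ = 2 ^ (Q + (x+12)*5) := (pow_add 2 Q _).symm
      _ ≤ 2 ^ (x^2 + 24) := Nat.pow_le_pow_right (by omega) hexp
      _ = 2 ^ ((n+1+1) ^ ((Q+2)*20) + 24) := by rw [hx2]
  · -- j = jj + 2
    have hz : beta Q (jj+2+1) n = beta Q (jj+2) (n+1) + (2*jj+15) := by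
      simp only [beta, Wf, if_neg (by omega : ¬ jj+2 = 0), if_neg (by omega : ¬ jj+2 = 1),
        if_neg (by omega : ¬ jj+2+1 = 0), if_neg (by omega : ¬ jj+2+1 = 1)]
      have hbase : n + 1 + (jj+2) = n + (jj+2+1) := by omega
      rw [hbase]
      have e1 : (jj+2+1)^2 = jj*jj + 6*jj + 9 := by ring
      have e2 : (jj+2)^2 = jj*jj + 4*jj + 4 := by ring
      omega
    rw [hz]
    set z := beta Q (jj+2) (n+1) with hzdef
    have hz1 : n + 1 + (jj + 2) ≤ z := by
      have : (n + 1 + (jj+2)) ^ (Wf Q (jj+2)) ≤ z := by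
        simp only [hzdef, beta]
        omega
      calc n + 1 + (jj+2) ≤ (n + 1 + (jj+2)) ^ (Wf Q (jj+2)) := by
            apply Nat.le_self_pow
            simp only [Wf, if_neg (by omega : ¬ jj+2 = 0), if_neg (by omega : ¬ jj+2 = 1)]
            positivity
        _ ≤ z := this
    have hzQ : Q ≤ z := by
      have hW : Wf Q (jj+2) = (Q+2)*20 := by
        simp only [Wf, if_neg (by omega : ¬ jj+2 = 0), if_neg (by omega : ¬ jj+2 = 1)]
      have h1 : 2 ^ Q ≤ (n + 1 + (jj+2)) ^ ((Q+2)*20) := by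
        calc 2 ^ Q ≤ 2 ^ ((Q+2)*20) := Nat.pow_le_pow_right (by omega) (by omega)
          _ ≤ (n + 1 + (jj+2)) ^ ((Q+2)*20) := Nat.pow_le_pow_left (by omega) _
      have h2' : (n + 1 + (jj+2)) ^ ((Q+2)*20) ≤ z := by
        simp only [hzdef, beta, hW]
        omega
      calc Q ≤ 2^Q := ((Nat.lt_two_pow_self (n := Q))).le
        _ ≤ z := h1.trans h2'
    set T' := twrN (jj+1) z with hT'
    have hzT' : z ≤ T' := le_twrN _ _
    have hTdef : twrN (jj+2) z = 2 ^ T' := rfl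
    have h1 : twrN (jj+2) z + 2 ≤ 2 ^ (T' + 1) := by
      have h2' : (2:ℕ) ≤ 2 ^ T' := by
        calc (2:ℕ) = 2^1 := by norm_num
          _ ≤ 2 ^ T' := Nat.pow_le_pow_right (by omega) (by omega)
      rw [hTdef]
      have hps : 2 ^ (T' + 1) = 2 ^ T' * 2 := pow_succ 2 T'
      omega
    have h2'' : (twrN (jj+2) z + 2) ^ (jj+2+4) ≤ 2 ^ ((T'+1)*(jj+6)) := by
      rw [pow_mul]
      exact Nat.pow_le_pow_left h1 _
    have h4 : Q + (T'+1)*(jj+6) ≤ (jj+8) * T' := by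
      have e1 : (T'+1)*(jj+6) = T'*(jj+6) + (jj+6) := by ring
      have e2 : (jj+8)*T' = T'*(jj+6) + 2*T' := by ring
      omega
    have h5 : (jj+8) * T' ≤ twrN (jj+1) (z + (jj+8)) := mul_twrN_le (by omega) _ _
    have h6 : twrN (jj+1) (z + (jj+8)) ≤ twrN (jj+1) (z + (2*jj+15)) :=
      twrN_mono _ (by omega)
    calc (Q+1) * (twrN (jj+2) z + 2) ^ (jj+2+4)
        ≤ 2^Q * 2^((T'+1)*(jj+6)) := Nat.mul_le_mul hQ2 h2''
      _ = 2 ^ (Q + (T'+1)*(jj+6)) := (pow_add 2 Q _).symm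
      _ ≤ 2 ^ ((jj+8) * T') := Nat.pow_le_pow_right (by omega) h4
      _ ≤ 2 ^ (twrN (jj+1) (z + (2*jj+15))) :=
          Nat.pow_le_pow_right (by omega) (h5.trans h6)
      _ = twrN (jj+2) (z + (2*jj+15)) := rfl

lemma Gbound {r s : ℕ} (hs : s < r) (h2 : r < 2*s) :
    ∀ j n, 3 ≤ n → G r s j n ≤ twrN j (beta (r.choose s) j n) := by
  obtain ⟨hQ3, hrQ⟩ := Q_ge hs h2
  intro j
  induction j with
  | zero =>
      intro n hn
      show 2 * n ^ (r.choose s) + 4 ≤ twrN 0 (beta (r.choose s) 0 n)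
      simp only [twrN, beta, Wf, if_pos rfl, mul_one, Nat.add_zero]
      norm_num
      have he : n ^ (r.choose s + 2) = n ^ (r.choose s) * n^2 := by ring
      have h1 : 1 ≤ n ^ (r.choose s) := Nat.one_le_pow _ _ (by omega)
      have h9 : 9 ≤ n^2 := by nlinarith
      have h3 : n ^ (r.choose s) * 9 ≤ n ^ (r.choose s) * n^2 := Nat.mul_le_mul_left _ h9
      omega
  | succ j ih =>
      intro n hn
      have hT := ih (n+1) (by omega)
      have h1 := G_succ_le hs h2 j n hT
      have h2' := key_ineq (r.choose s) hQ3 j n hn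
      calc G r s (j+1) n
          ≤ 2 ^ ((r.choose s + 1) * (twrN j (beta (r.choose s) j (n+1)) + 2)^(j+4)) := h1
        _ ≤ 2 ^ (twrN j (beta (r.choose s) (j+1) n)) := Nat.pow_le_pow_right (by omega) h2'
        _ = twrN (j+1) (beta (r.choose s) (j+1) n) := rfl


lemma twrN_le_towerR : ∀ (j m : ℕ) (x : ℝ), (m : ℝ) ≤ x → (twrN j m : ℝ) ≤ towerR j x := by
  intro j
  induction j with
  | zero => intro m x h; exact h
  | succ j ih =>
      intro m x h
      show ((2 ^ twrN j m : ℕ) : ℝ) ≤ (2:ℝ) ^ towerR j x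
      rw [Nat.cast_pow, Nat.cast_ofNat, ← Real.rpow_natCast 2 (twrN j m)]
      exact Real.rpow_le_rpow_of_exponent_le (by norm_num) (ih m x h)

lemma beta_le {Q j n : ℕ} (hQ3 : 3 ≤ Q) (hn : 3 ≤ n) (hj : j ≤ n) :
    beta Q j n ≤ n ^ (40*Q + 82) := by
  have hW : Wf Q j ≤ 20*Q + 40 := by
    simp only [Wf]
    split_ifs <;> omega
  have h1 : n + j ≤ n^2 := by nlinarith
  have h2 : (n+j) ^ (Wf Q j) ≤ n ^ (40*Q+80) := by
    calc (n+j) ^ (Wf Q j) ≤ (n^2) ^ (Wf Q j) := Nat.pow_le_pow_left h1 _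
      _ = n ^ (2 * Wf Q j) := by rw [← pow_mul]
      _ ≤ n ^ (40*Q+80) := Nat.pow_le_pow_right (by omega) (by omega)
  have e2 : n^2 = n*n := sq n
  have ej : j^2 = j*j := sq j
  have h3 : j*j + 10*j ≤ n*n + 10*n := by nlinarith
  have hPn2 : n*n ≤ n^(40*Q+80) := by
    rw [← e2]
    exact Nat.pow_le_pow_right (by omega) (by omega)
  have h9 : 9 ≤ n*n := by nlinarith
  have hm : n^(40*Q+80) * 9 ≤ n^(40*Q+80) * (n*n) := Nat.mul_le_mul_left _ h9
  have eP : n^(40*Q+82) = n^(40*Q+80) * (n*n) := by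
    rw [← e2, ← pow_add]
  have h10 : 10*n ≤ 7*(n*n) := by nlinarith
  simp only [beta, ej]
  omega

end CAP

set_option maxRecDepth 4000 in
/-- **Main theorem.** There is an absolute constant `C > 0` such that for all
`n ≥ k ≥ 3` and `r > s > r/2`, we have
`A_k(n; r, s) ≤ T_{k-3}(n^(C · binom(r,s)² · log binom(r,s)))`. -/
theorem color_avoiding_paths_tower_bound :
    ∃ C : ℝ, 0 < C ∧
      ∀ n k r s : ℕ, 3 ≤ k → k ≤ n → s < r → r < 2 * s →
        (colorAvoidA k n r s : ℝ) ≤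
          towerR (k - 3) ((n : ℝ) ^
            (C * (Nat.choose r s : ℝ) ^ 2 * Real.log (Nat.choose r s))) := by
  refine ⟨100, by norm_num, ?_⟩
  intro n k r s hk hkn hsr hr2s
  set Q := r.choose s with hQ
  obtain ⟨hQ3, hrQ⟩ := CAP.Q_ge hsr hr2s
  have hgood : CAP.Good r s k n (CAP.G r s (k-3) n) := by
    have h := CAP.master hsr hr2s (k-3) n (by omega)
    have he : k - 3 + 3 = k := by omega
    rwa [he] at h
  have hA : colorAvoidA k n r s ≤ CAP.G r s (k-3) n := Nat.sInf_le hgood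
  have hGb := CAP.Gbound hsr hr2s (k-3) n (by omega)
  have hbeta : CAP.beta Q (k-3) n ≤ n ^ (40*Q + 82) :=
    CAP.beta_le hQ3 (by omega) (by omega)
  have hreal : ((CAP.twrN (k-3) (CAP.beta Q (k-3) n)) : ℝ) ≤
      towerR (k-3) ((n:ℝ) ^ ((100:ℝ) * (Q:ℝ)^2 * Real.log Q)) := by
    apply CAP.twrN_le_towerR
    have hn1 : (1:ℝ) ≤ (n:ℝ) := by exact_mod_cast (show 1 ≤ n by omega)
    calc ((CAP.beta Q (k-3) n : ℕ) : ℝ) ≤ ((n ^ (40*Q+82) : ℕ) : ℝ) := by exact_mod_cast hbeta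
      _ = (n:ℝ) ^ ((40*Q+82 : ℕ) : ℝ) := by rw [Nat.cast_pow, Real.rpow_natCast]
      _ ≤ (n:ℝ) ^ ((100:ℝ) * (Q:ℝ)^2 * Real.log Q) := by
          apply Real.rpow_le_rpow_of_exponent_le hn1
          have hQpos : (0:ℝ) < (Q:ℝ) := by exact_mod_cast (show 0 < Q by omega)
          have hlog : (1:ℝ) ≤ Real.log Q := by
            rw [Real.le_log_iff_exp_le hQpos]
            calc Real.exp 1 ≤ 2.7182818286 := (Real.exp_one_lt_d9).le
              _ ≤ 3 := by norm_num
              _ ≤ (Q:ℝ) := by exact_mod_cast hQ3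
          have hQR : (3:ℝ) ≤ (Q:ℝ) := by exact_mod_cast hQ3
          have hq1 : (40*(Q:ℝ) + 82) ≤ 100*(Q:ℝ)^2 := by nlinarith
          calc ((40*Q+82 : ℕ):ℝ) = 40*(Q:ℝ)+82 := by push_cast; ring
            _ ≤ 100*(Q:ℝ)^2 := hq1
            _ = 100*(Q:ℝ)^2 * 1 := by ring
            _ ≤ 100*(Q:ℝ)^2 * Real.log Q := by
                apply mul_le_mul_of_nonneg_left hlog (by positivity)
  calc (colorAvoidA k n r s : ℝ) ≤ (CAP.G r s (k-3) n : ℝ) := by exact_mod_cast hA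
    _ ≤ ((CAP.twrN (k-3) (CAP.beta Q (k-3) n)) : ℝ) := by exact_mod_cast hGb
    _ ≤ towerR (k-3) ((n:ℝ) ^ ((100:ℝ) * (Q:ℝ)^2 * Real.log Q)) := hreal
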